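/- For every real t, the matrix exponential of tA equals (e^{-ηt}/a) times the 2×2 matrix [[(θ_m/θ)(e^{at}-1)+a e^{at}, (a+θ_m/θ)(1-e^{at})], [(θ_m/θ)(e^{at}-1), (θ_m/θ)(1-e^{at})+a]]. -/

import Mathlib

set_option maxHeartbeats 1000000


open Matrix Real

/-- For every real `t`, the matrix exponential of `t • A` equals
`(exp (-η*t) / a)` times the explicit 2×2 matrix. -/
theorem matrix_exp_of_triggering_matrix
    (η ε₃ θ θm : ℝ) (hη : 0 < η) (hε₃ : 0 ≤ ε₃) (hθ : 0 < θ) (hθm : 0 < θm)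
    (a : ℝ) (ha : a = 1 + ε₃ + η)
    (A : Matrix (Fin 2) (Fin 2) ℝ)
    (hA : A = !![1 + ε₃ + θm / θ, -(a + θm / θ); θm / θ, -(η + θm / θ)]) :
    ∀ t : ℝ,
      NormedSpace.exp (t • A) =
        (Real.exp (-η * t) / a) •
          !![(θm / θ) * (Real.exp (a * t) - 1) + a * Real.exp (a * t),
              (a + θm / θ) * (1 - Real.exp (a * t));
             (θm / θ) * (Real.exp (a * t) - 1),
              (θm / θ) * (1 - Real.exp (a * t)) + a] := by
  intro t
  set b : ℝ := θm / θ with hb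
  have ha0 : a ≠ 0 := by rw [ha]; nlinarith
  -- eigenvector matrix
  set P : Matrix (Fin 2) (Fin 2) ℝ := !![1, a + b; 1, b] with hP
  set Q : Matrix (Fin 2) (Fin 2) ℝ := !![-b/a, (a+b)/a; 1/a, -(1/a)] with hQ
  have hPQ : P * Q = 1 := by
    rw [hP, hQ]
    ext i j
    fin_cases i <;> fin_cases j <;>
      simp [Matrix.mul_apply, Fin.sum_univ_two] <;> field_simp <;> ring
  have hQP : Q * P = 1 := by
    rw [hP, hQ]
    ext i j
    fin_cases i <;> fin_cases j <;>
      simp [Matrix.mul_apply, Fin.sum_univ_two] <;> field_simp <;> ring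
  set U : (Matrix (Fin 2) (Fin 2) ℝ)ˣ := ⟨P, Q, hPQ, hQP⟩ with hU
  have diag2 : ∀ x y : ℝ, diagonal (![x, y] : Fin 2 → ℝ) = !![x, 0; 0, y] := by
    intro x y
    ext i j
    fin_cases i <;> fin_cases j <;> simp [Matrix.diagonal_apply]
  have hdiag : t • A = (U : Matrix (Fin 2) (Fin 2) ℝ) * diagonal (![-η * t, (a - η) * t] : Fin 2 → ℝ) * ((U⁻¹ : (Matrix (Fin 2) (Fin 2) ℝ)ˣ) : Matrix (Fin 2) (Fin 2) ℝ) := by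
    show t • A = P * diagonal (![-η * t, (a - η) * t] : Fin 2 → ℝ) * Q
    rw [hA, hP, hQ, diag2]
    ext i j
    fin_cases i <;> fin_cases j <;>
      · simp [Matrix.mul_apply, Fin.sum_univ_two, Matrix.smul_apply, hb]
        field_simp
        rw [ha]
        ring
  rw [hdiag, Matrix.exp_units_conj, Matrix.exp_diagonal]
  have hexp : NormedSpace.exp ![-η * t, (a - η) * t] =
      ![Real.exp (-η * t), Real.exp ((a - η) * t)] := by
    funext i
    rw [Pi.coe_exp]
    fin_cases i <;> simp [← Real.exp_eq_exp_ℝ]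
  rw [hexp]
  have hee : Real.exp ((a - η) * t) = Real.exp (-η * t) * Real.exp (a * t) := by
    rw [← Real.exp_add]; ring_nf
  have he : Real.exp (-η * t) ≠ 0 := Real.exp_ne_zero _
  have : (↑U⁻¹ : Matrix (Fin 2) (Fin 2) ℝ) = Q := rfl
  rw [this]
  show P * diagonal (![Real.exp (-η * t), Real.exp ((a - η) * t)] : Fin 2 → ℝ) * Q = _
  rw [hP, hQ, diag2, Matrix.mul_fin_two, Matrix.mul_fin_two, hee]
  ext i j
  fin_cases i <;> fin_cases j <;>
    · simp [Matrix.smul_apply, hb]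
      field_simp
      ring
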